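/- For 1 ≤ q < 2, ∫_{\mathbb{D}} |1 − w|^{−q} dA(w) = Γ(2−q)/Γ(2 − q/2)², where dA is the normalized area measure on the unit disk. -/

import Mathlib

open MeasureTheory Metric Set

lemma realBeta {a b : ℝ} (ha : 0 < a) (hb : 0 < b) :
    ∫ t in (0:ℝ)..1, t ^ (a-1) * (1-t) ^ (b-1)
      = Real.Gamma a * Real.Gamma b / Real.Gamma (a+b) := by
  have h1 : Complex.betaIntegral a b
      = ((∫ t in (0:ℝ)..1, t ^ (a-1) * (1-t) ^ (b-1) : ℝ) : ℂ) := by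
    rw [← intervalIntegral.integral_ofReal]
    refine intervalIntegral.integral_congr fun x hx => ?_
    rw [uIcc_of_le (by norm_num)] at hx
    have e1 : ((a:ℂ) - 1) = ((a - 1 : ℝ) : ℂ) := by push_cast; ring
    have e2 : ((b:ℂ) - 1) = ((b - 1 : ℝ) : ℂ) := by push_cast; ring
    have e3 : (1 - (x:ℂ)) = ((1 - x : ℝ) : ℂ) := by push_cast; ring
    rw [e1, e2, e3, ← Complex.ofReal_cpow hx.1, ← Complex.ofReal_cpow (by linarith [hx.2]),
      ← Complex.ofReal_mul]
  have h2 := Complex.Gamma_mul_Gamma_eq_betaIntegral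
    (s := (a:ℂ)) (t := (b:ℂ)) (by simpa using ha) (by simpa using hb)
  rw [h1] at h2
  have hΓ : Real.Gamma (a+b) ≠ 0 := (Real.Gamma_pos_of_pos (by linarith)).ne'
  rw [← Complex.ofReal_add, Complex.Gamma_ofReal, Complex.Gamma_ofReal, Complex.Gamma_ofReal,
    ← Complex.ofReal_mul, ← Complex.ofReal_mul] at h2
  have h3 := Complex.ofReal_inj.mp h2
  rw [eq_div_iff hΓ]
  linarith [h3]

open Real

lemma sin_image : Real.sin '' Ioo (-(π/2)) (π/2) = Ioo (-1 : ℝ) 1 := by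
  apply Subset.antisymm (Real.mapsTo_sin_Ioo.image_subset)
  intro x hx
  exact ⟨Real.arcsin x, ⟨Real.neg_pi_div_two_lt_arcsin.mpr hx.1,
    Real.arcsin_lt_pi_div_two.mpr hx.2⟩, Real.sin_arcsin hx.1.le hx.2.le⟩

lemma affine_image : (fun t : ℝ => 2*t - 1) '' Ioo 0 1 = Ioo (-1 : ℝ) 1 := by
  ext x
  constructor
  · rintro ⟨t, ht, rfl⟩
    simp only [mem_Ioo] at ht ⊢
    constructor <;> linarith [ht.1, ht.2]
  · intro hx; exact ⟨(x+1)/2, ⟨by linarith [hx.1], by linarith [hx.2]⟩, by ring⟩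

lemma cospow {s : ℝ} (hs : 0 < s) :
    ∫ θ in Ioo (-(π/2)) (π/2), Real.cos θ ^ s
      = 2 ^ s * (Real.Gamma ((s+1)/2) ^ 2 / Real.Gamma (s+1)) := by
  have hinj : InjOn Real.sin (Ioo (-(π/2)) (π/2)) :=
    Real.injOn_sin.mono (Ioo_subset_Icc_self)
  have hderiv : ∀ x ∈ Ioo (-(π/2)) (π/2),
      HasDerivWithinAt Real.sin (Real.cos x) (Ioo (-(π/2)) (π/2)) x :=
    fun x _ => (Real.hasDerivAt_sin x).hasDerivWithinAt
  have step1 : ∫ x in Ioo (-1 : ℝ) 1, (1 - x^2) ^ ((s-1)/2)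
      = ∫ θ in Ioo (-(π/2)) (π/2), Real.cos θ ^ s := by
    rw [← sin_image, integral_image_eq_integral_abs_deriv_smul measurableSet_Ioo hderiv hinj]
    refine setIntegral_congr_fun measurableSet_Ioo fun θ hθ => ?_
    have hc : 0 < Real.cos θ := Real.cos_pos_of_mem_Ioo hθ
    have h1 : 1 - Real.sin θ ^ 2 = Real.cos θ ^ 2 := by
      have := Real.sin_sq_add_cos_sq θ; linarith
    rw [smul_eq_mul, abs_of_pos hc, h1,
      ← Real.rpow_natCast (Real.cos θ) 2, ← Real.rpow_mul hc.le]
    have h2 : ((2:ℕ):ℝ) * ((s-1)/2) = s-1 := by push_cast; ring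
    rw [h2]
    nth_rewrite 1 [← Real.rpow_one (Real.cos θ)]
    rw [← Real.rpow_add hc]
    norm_num
  have hderiv2 : ∀ x ∈ Ioo (0:ℝ) 1,
      HasDerivWithinAt (fun t : ℝ => 2*t - 1) 2 (Ioo (0:ℝ) 1) x := by
    intro x _
    simpa using (((hasDerivAt_id x).const_mul 2).sub_const 1).hasDerivWithinAt
  have hinj2 : InjOn (fun t : ℝ => 2*t - 1) (Ioo 0 1) := fun a _ b _ h => by
    simp only at h; linarith
  have step2 : ∫ x in Ioo (-1 : ℝ) 1, (1 - x^2) ^ ((s-1)/2)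
      = ∫ t in Ioo (0:ℝ) 1, 2 * (4 * (t * (1-t))) ^ ((s-1)/2) := by
    rw [← affine_image, integral_image_eq_integral_abs_deriv_smul measurableSet_Ioo
      hderiv2 hinj2]
    refine setIntegral_congr_fun measurableSet_Ioo fun t _ => ?_
    rw [smul_eq_mul, abs_of_pos (by norm_num : (0:ℝ) < 2),
      show (1 - (2*t-1)^2 : ℝ) = 4*(t*(1-t)) from by ring]
  have step3 : ∫ t in Ioo (0:ℝ) 1, 2 * (4 * (t * (1-t))) ^ ((s-1)/2)
      = 2^s * ∫ t in Ioo (0:ℝ) 1, t ^ ((s+1)/2 - 1) * (1-t) ^ ((s+1)/2 - 1) := by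
    rw [← integral_const_mul]
    refine setIntegral_congr_fun measurableSet_Ioo fun t ht => ?_
    have h4 : (4:ℝ) * (t * (1-t)) = 4 * t * (1-t) := by ring
    rw [h4, Real.mul_rpow (by nlinarith [ht.1, ht.2] : (0:ℝ) ≤ 4*t) (by linarith [ht.2]),
      Real.mul_rpow (by norm_num : (0:ℝ) ≤ 4) ht.1.le]
    have h2 : (4:ℝ) ^ ((s-1)/2) = 2 ^ (s-1) := by
      rw [show (4:ℝ) = 2^(2:ℝ) by norm_num [Real.rpow_natCast], ← Real.rpow_mul (by norm_num)]
      ring_nf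
    have h2s : (2:ℝ) * 2 ^ (s-1) = 2 ^ s := by
      nth_rewrite 1 [← Real.rpow_one (2:ℝ)]
      rw [← Real.rpow_add (by norm_num)]
      norm_num
    rw [h2, ← h2s]
    have : (s-1)/2 = (s+1)/2 - 1 := by ring
    rw [this]; ring
  have step4 : ∫ t in Ioo (0:ℝ) 1, t ^ ((s+1)/2 - 1) * (1-t) ^ ((s+1)/2 - 1)
      = Real.Gamma ((s+1)/2) ^ 2 / Real.Gamma (s+1) := by
    have ha : 0 < (s+1)/2 := by linarith
    have := realBeta ha ha
    rw [intervalIntegral.integral_of_le (by norm_num : (0:ℝ) ≤ 1),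
      integral_Ioc_eq_integral_Ioo] at this
    rw [this, sq, show (s+1)/2 + (s+1)/2 = s+1 from by ring]
  rw [← step1, step2, step3, step4]

set_option maxHeartbeats 2000000 in
theorem stmt_9 (q : ℝ) (hq1 : 1 ≤ q) (hq2 : q < 2) :
    (Real.pi)⁻¹ * ∫ w in ball (0 : ℂ) 1, ‖1 - w‖ ^ (-q)
      = Real.Gamma (2 - q) / (Real.Gamma (2 - q / 2)) ^ 2 := by
  classical
  have hs0 : (0:ℝ) < 2 - q := by linarith
  set F : ℂ → ℝ := (ball (1:ℂ) 1).indicator (fun w => ‖w‖ ^ (-q)) with hF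
  -- step 1 : translation
  have h1 : ∫ w in ball (0 : ℂ) 1, ‖1 - w‖ ^ (-q) = ∫ w : ℂ, F w := by
    have e : ∀ w : ℂ, (ball (0:ℂ) 1).indicator (fun w => ‖1 - w‖ ^ (-q)) w
        = F (1 - w) := by
      intro w
      rw [hF, indicator_apply, indicator_apply]
      have hiff : w ∈ ball (0:ℂ) 1 ↔ 1 - w ∈ ball (1:ℂ) 1 := by
        simp [mem_ball, Complex.dist_eq]
      by_cases hw : w ∈ ball (0:ℂ) 1
      · rw [if_pos hw, if_pos (hiff.mp hw)]
      · rw [if_neg hw, if_neg (fun h => hw (hiff.mpr h))]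
    rw [← integral_indicator measurableSet_ball]
    calc ∫ w, (ball (0:ℂ) 1).indicator (fun w => ‖1 - w‖ ^ (-q)) w
        = ∫ w : ℂ, F (1 - w) := by simp_rw [e]
      _ = ∫ w : ℂ, F (1 + w) := by
          simp_rw [sub_eq_add_neg]
          exact integral_neg_eq_self (fun w => F (1 + w)) volume
      _ = ∫ w : ℂ, F w := integral_add_left_eq_self F (1:ℂ)
  -- the polar-coordinates integrand
  set H : ℝ × ℝ → ℝ :=
    {p : ℝ × ℝ | p.1 < 2 * Real.cos p.2}.indicator (fun p => p.1 ^ (1-q)) with hH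
  have hmem : ∀ p : ℝ × ℝ, 0 < p.1 →
      (Complex.polarCoord.symm p ∈ ball (1:ℂ) 1 ↔ p.1 < 2 * Real.cos p.2) := by
    intro p hp
    rw [mem_ball, Complex.dist_eq, Complex.polarCoord_symm_apply]
    have hre : ((p.1 : ℂ) * (Real.cos p.2 + Real.sin p.2 * Complex.I) - 1).re
        = p.1 * Real.cos p.2 - 1 := by
      simp [Complex.cos_ofReal_re, Complex.sin_ofReal_re]
    have him : ((p.1 : ℂ) * (Real.cos p.2 + Real.sin p.2 * Complex.I) - 1).im
        = p.1 * Real.sin p.2 := by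
      simp [Complex.cos_ofReal_re, Complex.sin_ofReal_re]
    rw [Complex.norm_def, Complex.normSq_apply, hre, him,
      Real.sqrt_lt' (by norm_num : (0:ℝ) < 1)]
    have hpyth := Real.sin_sq_add_cos_sq p.2
    have key : (p.1 * Real.cos p.2 - 1) * (p.1 * Real.cos p.2 - 1)
        + p.1 * Real.sin p.2 * (p.1 * Real.sin p.2)
        = p.1 * p.1 - 2 * p.1 * Real.cos p.2 + 1 := by
      linear_combination (p.1 * p.1) * hpyth
    rw [key]
    constructor
    · intro h
      by_contra hcon
      push_neg at hcon
      nlinarith [mul_nonneg hp.le (sub_nonneg.mpr hcon)]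
    · intro h
      nlinarith [mul_pos hp (sub_pos.mpr h)]
  -- step 2 : polar coordinates
  have h2 : ∫ w : ℂ, F w = ∫ p in Ioi (0:ℝ) ×ˢ Ioo (-π) π, H p := by
    rw [← Complex.integral_comp_polarCoord_symm F, polarCoord_target]
    refine setIntegral_congr_fun (measurableSet_Ioi.prod measurableSet_Ioo) fun p hp => ?_
    have hp1 : (0:ℝ) < p.1 := hp.1
    rw [smul_eq_mul, hF, hH, indicator_apply, indicator_apply]
    by_cases hmem' : p.1 < 2 * Real.cos p.2
    · rw [if_pos ((hmem p hp1).mpr hmem'), if_pos (show p ∈ {p : ℝ×ℝ | p.1 < 2 * Real.cos p.2} from hmem')]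
      rw [Complex.norm_polarCoord_symm, abs_of_pos hp1]
      rw [show (1:ℝ) - q = 1 + (-q) from by ring, Real.rpow_add hp1, Real.rpow_one]
    · rw [if_neg (fun h => hmem' ((hmem p hp1).mp h)),
        if_neg (show p ∉ {p : ℝ×ℝ | p.1 < 2 * Real.cos p.2} from hmem'), mul_zero]
  -- measurability
  have hrpm : Measurable fun x : ℝ => x ^ (1-q) :=
    measurable_of_continuousOn_compl_singleton 0 (continuousOn_of_forall_continuousAt fun x hx =>
      Real.continuousAt_rpow_const x (1-q) (Or.inl hx))
  have hsetm : MeasurableSet {p : ℝ × ℝ | p.1 < 2 * Real.cos p.2} :=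
    measurableSet_lt measurable_fst
      (continuous_const.mul (Real.continuous_cos.comp continuous_snd)).measurable
  have hmeasH : Measurable H := (hrpm.comp measurable_fst).indicator hsetm
  -- integrable bound
  have h02 : IntegrableOn (fun r : ℝ => r ^ (1-q)) (Ioo 0 2) volume := by
    have := (intervalIntegral.intervalIntegrable_rpow' (a := 0) (b := 2) (r := 1-q)
      (by linarith)).1
    exact this.mono_set Ioo_subset_Ioc_self
  have hboundInt : Integrable
      (fun p : ℝ × ℝ => (Ioo (0:ℝ) 2).indicator (fun r => r ^ (1-q)) p.1 * (1:ℝ))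
      ((volume.restrict (Ioi (0:ℝ))).prod (volume.restrict (Ioo (-π) π))) := by
    have hf' : Integrable ((Ioo (0:ℝ) 2).indicator (fun r => r ^ (1-q)))
        (volume.restrict (Ioi (0:ℝ))) := by
      rw [integrable_indicator_iff measurableSet_Ioo]
      rw [IntegrableOn, Measure.restrict_restrict measurableSet_Ioo]
      exact h02.mono_set inter_subset_left
    have hg' : Integrable (fun _ : ℝ => (1:ℝ)) (volume.restrict (Ioo (-π) π)) := by
      rw [← IntegrableOn]
      exact integrableOn_const (by
        rw [Real.volume_Ioo]; exact ENNReal.ofReal_ne_top)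
    exact hf'.mul_prod hg'
  have hHint : Integrable H ((volume.restrict (Ioi (0:ℝ))).prod (volume.restrict (Ioo (-π) π))) := by
    refine hboundInt.mono (hmeasH.aestronglyMeasurable) ?_
    rw [Measure.prod_restrict]
    refine (ae_restrict_iff' (measurableSet_Ioi.prod measurableSet_Ioo)).mpr
      (ae_of_all _ fun p hp => ?_)
    have hp1 : (0:ℝ) < p.1 := hp.1
    rw [hH, mul_one]
    by_cases h : p.1 < 2 * Real.cos p.2
    · have hp2 : p.1 ∈ Ioo (0:ℝ) 2 := ⟨hp1, by nlinarith [Real.cos_le_one p.2]⟩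
      rw [indicator_of_mem (show p ∈ {p : ℝ×ℝ | p.1 < 2 * Real.cos p.2} from h),
        indicator_of_mem hp2]
    · rw [indicator_of_notMem (show p ∉ {p : ℝ×ℝ | p.1 < 2 * Real.cos p.2} from h)]
      simp only [norm_zero, norm_nonneg]
  -- Fubini
  have h3 : ∫ p in Ioi (0:ℝ) ×ˢ Ioo (-π) π, H p
      = ∫ θ in Ioo (-π) π, ∫ r in Ioi (0:ℝ), H (r, θ) := by
    rw [Measure.volume_eq_prod ℝ ℝ, ← Measure.prod_restrict]
    exact integral_prod_symm H hHint
  -- inner integral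
  have hinner : EqOn (fun θ => ∫ r in Ioi (0:ℝ), H (r, θ))
      ((Ioo (-(π/2)) (π/2)).indicator (fun θ => (2 * Real.cos θ) ^ (2-q) / (2-q)))
      (Ioo (-π) π) := by
    intro θ hθ
    simp only
    by_cases hc : 0 < Real.cos θ
    · have hmem2 : θ ∈ Ioo (-(π/2)) (π/2) := by
        constructor
        · by_contra hcon
          push_neg at hcon
          have : Real.cos θ ≤ 0 := by
            rw [← Real.cos_neg]
            exact Real.cos_nonpos_of_pi_div_two_le_of_le (by linarith)
              (by linarith [hθ.1, Real.pi_pos])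
          linarith
        · by_contra hcon
          push_neg at hcon
          have : Real.cos θ ≤ 0 :=
            Real.cos_nonpos_of_pi_div_two_le_of_le (by linarith)
              (by linarith [hθ.2, Real.pi_pos])
          linarith
      rw [indicator_of_mem hmem2]
      have hcong : EqOn (fun r : ℝ => H (r, θ))
          ((Iio (2 * Real.cos θ)).indicator (fun r => r ^ (1-q))) (Ioi 0) := by
        intro r _
        simp only [hH]
        by_cases h : r < 2 * Real.cos θ
        · rw [indicator_of_mem (show (r, θ) ∈ {p : ℝ×ℝ | p.1 < 2 * Real.cos p.2} from h),
            indicator_of_mem (show r ∈ Iio (2 * Real.cos θ) from h)]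
        · rw [indicator_of_notMem (show (r, θ) ∉ {p : ℝ×ℝ | p.1 < 2 * Real.cos p.2} from h),
            indicator_of_notMem (show r ∉ Iio (2 * Real.cos θ) from h)]
      rw [setIntegral_congr_fun measurableSet_Ioi hcong,
        setIntegral_indicator measurableSet_Iio, Ioi_inter_Iio,
        ← integral_Ioc_eq_integral_Ioo,
        ← intervalIntegral.integral_of_le (by linarith : (0:ℝ) ≤ 2 * Real.cos θ),
        integral_rpow (Or.inl (by linarith : (-1:ℝ) < 1 - q))]
      rw [Real.zero_rpow (by linarith : (1:ℝ) - q + 1 ≠ 0), sub_zero,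
        show (1:ℝ) - q + 1 = 2 - q from by ring]
    · push_neg at hc
      have hnot : θ ∉ Ioo (-(π/2)) (π/2) := fun h => absurd (Real.cos_pos_of_mem_Ioo h) (not_lt.mpr hc)
      rw [indicator_of_notMem hnot]
      have hcong : EqOn (fun r : ℝ => H (r, θ)) (fun _ => (0:ℝ)) (Ioi 0) := by
        intro r hr
        simp only [hH]
        exact indicator_of_notMem
          (show (r, θ) ∉ {p : ℝ×ℝ | p.1 < 2 * Real.cos p.2} from by
            simp only [mem_setOf_eq, not_lt]
            have : (0:ℝ) < r := hr
            nlinarith) _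
      rw [setIntegral_congr_fun measurableSet_Ioi hcong, integral_zero]
  -- outer integral
  have h4 : ∫ θ in Ioo (-π) π,
        (Ioo (-(π/2)) (π/2)).indicator (fun θ => (2 * Real.cos θ) ^ (2-q) / (2-q)) θ
      = (2:ℝ)^(2-q) / (2-q) * ∫ θ in Ioo (-(π/2)) (π/2), Real.cos θ ^ (2-q) := by
    rw [setIntegral_indicator measurableSet_Ioo,
      inter_eq_self_of_subset_right
        (Ioo_subset_Ioo (by linarith [Real.pi_pos]) (by linarith [Real.pi_pos])),
      ← integral_const_mul]
    refine setIntegral_congr_fun measurableSet_Ioo fun θ hθ => ?_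
    have hcθ := Real.cos_pos_of_mem_Ioo hθ
    rw [Real.mul_rpow (by norm_num) hcθ.le]
    ring
  rw [h1, h2, h3, setIntegral_congr_fun measurableSet_Ioo hinner, h4, cospow hs0]
  -- final Gamma algebra
  have hG1 : Real.Gamma (2 - q + 1) = (2 - q) * Real.Gamma (2 - q) :=
    Real.Gamma_add_one hs0.ne'
  have hG2 : Real.Gamma (2 - q/2) = ((2-q)/2) * Real.Gamma ((2-q)/2) := by
    rw [show (2:ℝ) - q/2 = (2-q)/2 + 1 from by ring]
    exact Real.Gamma_add_one (by positivity)
  have hdup : Real.Gamma ((2-q)/2) * Real.Gamma ((2-q+1)/2)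
      = Real.Gamma (2-q) * (2:ℝ) ^ (1-(2-q)) * Real.sqrt π := by
    have := Real.Gamma_mul_Gamma_add_half ((2-q)/2)
    rw [show (2-q)/2 + 1/2 = (2-q+1)/2 from by ring,
      show (2:ℝ) * ((2-q)/2) = 2 - q from by ring] at this
    exact this
  have hsqpi : Real.sqrt π ^ 2 = π := Real.sq_sqrt Real.pi_pos.le
  have hA : (0:ℝ) < (2:ℝ) ^ (2-q) := Real.rpow_pos_of_pos (by norm_num) _
  have hAB : (2:ℝ) ^ (1-(2-q)) * (2:ℝ) ^ (2-q) = 2 := by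
    rw [← Real.rpow_add (by norm_num)]
    norm_num
  have hΓ1 : (0:ℝ) < Real.Gamma (2-q) := Real.Gamma_pos_of_pos hs0
  have hΓ2 : (0:ℝ) < Real.Gamma ((2-q)/2) := Real.Gamma_pos_of_pos (by positivity)
  have hΓ3 : (0:ℝ) < Real.Gamma ((2-q+1)/2) := Real.Gamma_pos_of_pos (by positivity)
  have hB : (0:ℝ) < (2:ℝ) ^ (1-(2-q)) := Real.rpow_pos_of_pos (by norm_num) _
  rw [hG1, hG2]
  have hπ := Real.pi_pos
  have h6' : Real.Gamma ((2-q)/2) ^ 2 * Real.Gamma ((2-q+1)/2) ^ 2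
      = Real.Gamma (2-q) ^ 2 * ((2:ℝ) ^ (1-(2-q))) ^ 2 * π := by
    have h := congrArg (fun x : ℝ => x ^ 2) hdup
    simp only [mul_pow] at h
    rw [hsqpi] at h
    exact h
  have h7' : ((2:ℝ) ^ (2-q)) ^ 2 * ((2:ℝ) ^ (1-(2-q))) ^ 2 = 4 := by
    have h := congrArg (fun x : ℝ => x ^ 2) hAB
    simp only [mul_pow] at h
    norm_num at h
    nlinarith [h]
  field_simp
  linear_combination (((2:ℝ)^(2-q))^2) * h6'
    + (π * (Real.Gamma (2-q))^2) * h7'
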